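/- Suppose the matrices M_1,…,M_r satisfy conditions (H1a), (H1b) and (H1c). Then they satisfy condition (H1): for all u ∈ W_m and v ∈ W_n with t(u) = o(v), there exists a unique w ∈ W_{m+n} such that w|[0,m] = u and w|[m,m+n] = v. -/
import Mathlib


open Matrix

variable {r : ℕ} {A : Type*}

/-- The `j`-th standard basis vector of `ℤ^r`. -/
def evec (r : ℕ) (j : Fin r) : Fin r → ℤ := fun i => if i = j then 1 else 0

/-- `w` represents a word of shape `m` (only its values on `[0,m]` matter):
`m ≥ 0` and the transition matrices are respected on the box `[0,m]`. -/
def IsWord (M : Fin r → Matrix A A ℤ) (m : Fin r → ℤ) (w : (Fin r → ℤ) → A) : Prop :=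
  0 ≤ m ∧ ∀ (l : Fin r → ℤ) (j : Fin r), 0 ≤ l → l + evec r j ≤ m →
    M j (w (l + evec r j)) (w l) = 1

/-- Two representing functions agree on the box `[0,m]`; this is equality of
words of shape `m`. -/
def AgreeOn (m : Fin r → ℤ) (w w' : (Fin r → ℤ) → A) : Prop :=
  ∀ l : Fin r → ℤ, 0 ≤ l → l ≤ m → w l = w' l

/-- The restriction `w|[k,k+n]`, as a word based at `0`: `(restrictW k w) i = w (i + k)`. -/
def restrictW (k : Fin r → ℤ) (w : (Fin r → ℤ) → A) : (Fin r → ℤ) → A :=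
  fun i => w (i + k)

/-- `w` (a word of shape `m`) is `p`-periodic: the translate `τ_p w`, given by
`(τ_p w)(x) = w (x - p)`, agrees with `w` on `[0,m] ∩ [p,p+m]`. -/
def IsPeriodic (p m : Fin r → ℤ) (w : (Fin r → ℤ) → A) : Prop :=
  ∀ x : Fin r → ℤ, 0 ≤ x → x ≤ m → p ≤ x → x ≤ p + m → w (x - p) = w x

/-- Condition (H0): each `M j` is nonzero. -/
def H0 (M : Fin r → Matrix A A ℤ) : Prop := ∀ j, M j ≠ 0

/-- Condition (H1): unique products of words. -/
def H1 (M : Fin r → Matrix A A ℤ) : Prop :=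
  ∀ (m n : Fin r → ℤ) (u v : (Fin r → ℤ) → A),
    IsWord M m u → IsWord M n v → u m = v 0 →
      (∃ w, IsWord M (m + n) w ∧ AgreeOn m w u ∧ AgreeOn n (restrictW m w) v) ∧
      (∀ w w', IsWord M (m + n) w → AgreeOn m w u → AgreeOn n (restrictW m w) v →
        IsWord M (m + n) w' → AgreeOn m w' u → AgreeOn n (restrictW m w') v →
        AgreeOn (m + n) w w')

/-- Condition (H2): the directed graph on `A` with an edge `a → b` whenever
`M i b a = 1` for some `i` is irreducible. -/
def H2 (M : Fin r → Matrix A A ℤ) : Prop :=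
  ∀ a b : A, Relation.ReflTransGen (fun x y => ∃ i, M i y x = 1) a b

/-- Condition (H3): for each nonzero `p ∈ ℤ^r` there is a non-`p`-periodic word. -/
def H3 (M : Fin r → Matrix A A ℤ) : Prop :=
  ∀ p : Fin r → ℤ, p ≠ 0 → ∃ (m : Fin r → ℤ) (w : (Fin r → ℤ) → A),
    IsWord M m w ∧ ¬ IsPeriodic p m w

/-- Condition (H1a): the matrices commute. -/
def H1a [Fintype A] (M : Fin r → Matrix A A ℤ) : Prop :=
  ∀ i j, M i * M j = M j * M i

/-- Condition (H1b): for `i < j`, the entries of `M i * M j` lie in `{0,1}`. -/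
def H1b [Fintype A] (M : Fin r → Matrix A A ℤ) : Prop :=
  ∀ i j, i < j → ∀ a b : A, (M i * M j) b a = 0 ∨ (M i * M j) b a = 1

/-- Condition (H1c): for `i < j < k`, the entries of `M i * M j * M k` lie in `{0,1}`. -/
def H1c [Fintype A] (M : Fin r → Matrix A A ℤ) : Prop :=
  ∀ i j k, i < j → j < k → ∀ a b : A,
    (M i * M j * M k) b a = 0 ∨ (M i * M j * M k) b a = 1

/-- Condition (H3*). -/
def H3star (M : Fin r → Matrix A A ℤ) : Prop :=
  ∀ (j : Fin r) (m : Fin r → ℤ), m j = 0 → ∀ w : (Fin r → ℤ) → A, IsWord M m w →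
    ∃ u u', IsWord M (m + evec r j) u ∧ IsWord M (m + evec r j) u' ∧
      AgreeOn m u w ∧ AgreeOn m u' w ∧ u (evec r j) ≠ u' (evec r j)

/-- `x` represents the product word `uv` of `u ∈ W_m` and `v ∈ W_n`. -/
def IsProd (M : Fin r → Matrix A A ℤ) (m n : Fin r → ℤ)
    (u v x : (Fin r → ℤ) → A) : Prop :=
  IsWord M (m + n) x ∧ AgreeOn m x u ∧ AgreeOn n (restrictW m x) v


section auxx
set_option linter.unusedSectionVars false

lemma evec_self (j : Fin r) : evec r j j = 1 := by simp [evec]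
lemma evec_ne {j i : Fin r} (h : i ≠ j) : evec r j i = 0 := by simp [evec, h]
lemma evec_nonneg (j : Fin r) : (0 : Fin r → ℤ) ≤ evec r j := by
  intro i; by_cases h : i = j <;> simp [evec, h]
lemma add_evec_self (y : Fin r → ℤ) (j : Fin r) : (y + evec r j) j = y j + 1 := by
  simp [evec]
lemma add_evec_ne (y : Fin r → ℤ) {j t : Fin r} (h : t ≠ j) : (y + evec r j) t = y t := by
  simp [evec, h]
lemma sub_evec_self (y : Fin r → ℤ) (j : Fin r) : (y - evec r j) j = y j - 1 := by
  simp [evec]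
lemma sub_evec_ne (y : Fin r → ℤ) {j t : Fin r} (h : t ≠ j) : (y - evec r j) t = y t := by
  simp [evec, h]

lemma sum_sub_single (f g : Fin r → ℤ) (i : Fin r) (h : ∀ i', i' ≠ i → f i' = g i') :
    ∑ x, f x = ∑ x, g x + (f i - g i) := by
  have h1 : ∑ x ∈ Finset.univ.erase i, f x + f i = ∑ x, f x :=
    Finset.sum_erase_add _ _ (Finset.mem_univ i)
  have h2 : ∑ x ∈ Finset.univ.erase i, g x + g i = ∑ x, g x :=
    Finset.sum_erase_add _ _ (Finset.mem_univ i)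
  have h3 : ∑ x ∈ Finset.univ.erase i, f x = ∑ x ∈ Finset.univ.erase i, g x :=
    Finset.sum_congr rfl (fun x hx => h x (Finset.ne_of_mem_erase hx))
  omega

lemma eq_of_sum_le_one [Fintype A] (f : A → ℤ) (h0 : ∀ x, 0 ≤ f x) (h : ∑ x, f x ≤ 1)
    {d d' : A} (hd : 1 ≤ f d) (hd' : 1 ≤ f d') : d = d' := by
  classical
  by_contra hne
  have hs : f d + f d' ≤ ∑ x, f x := by
    have := Finset.sum_le_sum_of_subset_of_nonneg (Finset.subset_univ ({d, d'} : Finset A))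
      (fun x _ _ => h0 x)
    rwa [Finset.sum_pair hne] at this
  omega

lemma one_le_sum [Fintype A] (f : A → ℤ) (h0 : ∀ x, 0 ≤ f x) (d : A) (hd : 1 ≤ f d) :
    1 ≤ ∑ x, f x :=
  le_trans hd (Finset.single_le_sum (fun x _ => h0 x) (Finset.mem_univ d))

lemma exists_eq_one [Fintype A] (f : A → ℤ) (h0 : ∀ x, f x = 0 ∨ f x = 1) (h : ∑ x, f x = 1) :
    ∃ x, f x = 1 := by
  by_contra hne
  push_neg at hne
  have : ∀ x ∈ Finset.univ, f x = 0 := fun x _ => (h0 x).resolve_right (hne x)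
  rw [Finset.sum_eq_zero this] at h
  omega


variable [Fintype A] (M : Fin r → Matrix A A ℤ)
lemma Mnonneg (hM : ∀ j (a b : A), M j b a = 0 ∨ M j b a = 1) :
    ∀ j (a b : A), 0 ≤ M j b a := by
  intro j a b; rcases hM j a b with h | h <;> omega

lemma pair_le_one (h1a : H1a M) (h1b : H1b M) {i j : Fin r} (hij : i ≠ j) (a b : A) :
    (M i * M j) b a ≤ 1 := by
  rcases lt_or_gt_of_ne hij with h | h
  · rcases h1b i j h a b with h' | h' <;> omega
  · rw [h1a i j]
    rcases h1b j i h a b with h' | h' <;> omega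

lemma trip_le_one (h1a : H1a M) (h1c : H1c M) {i j k : Fin r}
    (hij : i ≠ j) (hik : i ≠ k) (hjk : j ≠ k) (a b : A) :
    (M i * M j * M k) b a ≤ 1 := by
  have key : ∀ p q s : Fin r, p < q → q < s → ∀ a b : A, (M p * M q * M s) b a ≤ 1 := by
    intro p q s h1 h2 a b
    rcases h1c p q s h1 h2 a b with h' | h' <;> omega
  rcases lt_or_gt_of_ne hij with h1 | h1 <;> rcases lt_or_gt_of_ne hik with h2 | h2 <;>
    rcases lt_or_gt_of_ne hjk with h3 | h3
  · exact key i j k h1 h3 a b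
  · -- i < j, i < k, k < j : order i k j
    have e : M i * M j * M k = M i * M k * M j := by
      rw [mul_assoc, h1a j k, ← mul_assoc]
    rw [e]; exact key i k j h2 h3 a b
  · -- i < j, k < i, j < k : impossible
    omega
  · -- i < j, k < i, k < j : order k i j
    have e : M i * M j * M k = M k * M i * M j := by
      rw [mul_assoc, h1a j k, ← mul_assoc, h1a i k]
    rw [e]; exact key k i j h2 h1 a b
  · -- j < i, i < k, j < k : order j i k
    have e : M i * M j * M k = M j * M i * M k := by rw [h1a i j]
    rw [e]; exact key j i k h1 h2 a b
  · -- j < i, i < k, k < j : impossible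
    omega
  · -- j < i, k < i, j < k : order j k i
    have e : M i * M j * M k = M j * M k * M i := by
      rw [h1a i j, mul_assoc, h1a i k, ← mul_assoc]
    rw [e]; exact key j k i h3 h2 a b
  · -- j < i, k < i, k < j : order k j i
    have e : M i * M j * M k = M k * M j * M i := by
      rw [h1a i j, mul_assoc, h1a i k, ← mul_assoc, h1a j k]
    rw [e]; exact key k j i h3 h1 a b

/-- Square completion: given a path `a →ᵢ c →ⱼ b`, there is a unique `d` with
`a →ⱼ d →ᵢ b`. -/
lemma square (hM : ∀ j (a b : A), M j b a = 0 ∨ M j b a = 1)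
    (h1a : H1a M) (h1b : H1b M) {i j : Fin r} (hij : i ≠ j) {a c b : A}
    (h1 : M i c a = 1) (h2 : M j b c = 1) :
    ∃ d, M j d a = 1 ∧ M i b d = 1 ∧ ∀ d', M j d' a = 1 → M i b d' = 1 → d' = d := by
  have hnn := Mnonneg M hM
  have hba : (M i * M j) b a = 1 := by
    have le1 := pair_le_one M h1a h1b hij a b
    have ge1 : 1 ≤ (M j * M i) b a := by
      rw [Matrix.mul_apply]
      refine one_le_sum _ (fun x => mul_nonneg (hnn j x b) (hnn i a x)) c ?_
      rw [h2, h1]; norm_num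
    rw [h1a j i] at ge1
    omega
  rw [Matrix.mul_apply] at hba
  have h01 : ∀ d : A, M i b d * M j d a = 0 ∨ M i b d * M j d a = 1 := by
    intro d
    rcases hM i d b with h' | h' <;> rcases hM j a d with h'' | h'' <;>
      rw [h', h''] <;> simp
  obtain ⟨d, hd⟩ := exists_eq_one _ h01 hba
  have hd1 : M i b d = 1 ∧ M j d a = 1 := by
    rcases hM i d b with h' | h' <;> rcases hM j a d with h'' | h'' <;>
      rw [h', h''] at hd <;> simp_all
  refine ⟨d, hd1.2, hd1.1, ?_⟩
  intro d' h1' h2'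
  refine eq_of_sum_le_one _ (fun x => mul_nonneg (hnn i x b) (hnn j a x)) (le_of_eq hba) ?_ ?_
  · rw [h1', h2']; norm_num
  · rw [hd1.1, hd1.2]; norm_num

lemma agree_of_L (hM : ∀ j (a b : A), M j b a = 0 ∨ M j b a = 1)
    (h1a : H1a M) (h1b : H1b M) {m n : Fin r → ℤ}
    (hm : 0 ≤ m) (hn : 0 ≤ n) {w w' : (Fin r → ℤ) → A}
    (hw : IsWord M (m + n) w) (hw' : IsWord M (m + n) w')
    (hL1 : ∀ l, 0 ≤ l → l ≤ m → w l = w' l)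
    (hL2 : ∀ l, m ≤ l → l ≤ m + n → w l = w' l) :
    AgreeOn (m + n) w w' := by
  suffices h : ∀ k : ℕ, ∀ x : Fin r → ℤ, 0 ≤ x → x ≤ m + n →
      (∑ t, |x t - m t|) ≤ (k : ℤ) → w x = w' x by
    intro x hx1 hx2
    exact h (∑ t, |x t - m t|).toNat x hx1 hx2 (Int.self_le_toNat _)
  intro k
  induction k with
  | zero =>
    intro x hx1 hx2 hx3
    have hx : x = m := by
      funext t
      have h1 : |x t - m t| ≤ ∑ t', |x t' - m t'| :=
        Finset.single_le_sum (f := fun t' => |x t' - m t'|)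
          (fun t' _ => abs_nonneg _) (Finset.mem_univ t)
      have h2 : |x t - m t| ≤ 0 := le_trans h1 (by exact_mod_cast hx3)
      have h3 := abs_eq_zero.mp (le_antisymm h2 (abs_nonneg _))
      omega
    rw [hx]; exact hL1 m hm le_rfl
  | succ k ih =>
    intro x hx1 hx2 hx3
    by_cases hxm : x ≤ m
    · exact hL1 x hx1 hxm
    by_cases hmx : m ≤ x
    · exact hL2 x hmx hx2
    simp only [Pi.le_def, not_forall, not_le] at hxm hmx
    obtain ⟨i, hi⟩ := hxm
    obtain ⟨jj, hjj⟩ := hmx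
    have hij : i ≠ jj := fun h => by rw [h] at hi; omega
    -- the three auxiliary points
    set p := x - evec r i with hpdef
    set q := x - evec r i + evec r jj with hqdef
    set s := x + evec r jj with hsdef
    have hp0 : 0 ≤ p := by
      intro t
      have h1 := hm t; have h2 := hx1 t
      simp only [hpdef, Pi.zero_apply, Pi.sub_apply, Pi.add_apply, evec] at h1 h2 ⊢
      rcases eq_or_ne t i with rfl | hti
      · rw [if_pos rfl]; omega
      · rw [if_neg hti]; omega
    have hpmn : p ≤ m + n := by
      intro t
      have h2 := hx2 t
      simp only [hpdef, Pi.zero_apply, Pi.sub_apply, Pi.add_apply, evec] at h2 ⊢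
      rcases eq_or_ne t i with rfl | hti
      · rw [if_pos rfl]; omega
      · rw [if_neg hti]; omega
    have hq0 : 0 ≤ q := by
      intro t
      have h1 := hm t; have h2 := hx1 t
      simp only [hqdef, Pi.zero_apply, Pi.sub_apply, Pi.add_apply, evec] at h1 h2 ⊢
      rcases eq_or_ne t i with rfl | hti
      · rw [if_pos rfl, if_neg hij]; omega
      · rw [if_neg hti]
        rcases eq_or_ne t jj with rfl | htj
        · rw [if_pos rfl]; omega
        · rw [if_neg htj]; omega
    have hqmn : q ≤ m + n := by
      intro t
      have h1 := hm t; have h3 := hn t; have h2 := hx2 t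
      simp only [hqdef, Pi.zero_apply, Pi.sub_apply, Pi.add_apply, evec] at h1 h2 h3 ⊢
      rcases eq_or_ne t i with rfl | hti
      · rw [if_pos rfl, if_neg hij]; omega
      · rw [if_neg hti]
        rcases eq_or_ne t jj with rfl | htj
        · rw [if_pos rfl]; omega
        · rw [if_neg htj]; omega
    have hs0 : 0 ≤ s := by
      intro t
      have h2 := hx1 t
      simp only [hsdef, Pi.zero_apply, Pi.sub_apply, Pi.add_apply, evec] at h2 ⊢
      rcases eq_or_ne t jj with rfl | htj
      · rw [if_pos rfl]; omega
      · rw [if_neg htj]; omega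
    have hsmn : s ≤ m + n := by
      intro t
      have h1 := hm t; have h3 := hn t; have h2 := hx2 t
      simp only [hsdef, Pi.zero_apply, Pi.sub_apply, Pi.add_apply, evec] at h1 h2 h3 ⊢
      rcases eq_or_ne t jj with rfl | htj
      · rw [if_pos rfl]; omega
      · rw [if_neg htj]; omega
    -- rearrangements
    have hpi : p + evec r i = x := by rw [hpdef]; ring
    have hqi : q + evec r i = s := by rw [hqdef, hsdef]; ring
    -- sums
    have habsi : |p i - m i| = |x i - m i| - 1 := by
      have h : p i = x i - 1 := by simp [hpdef, evec_self]
      rw [h, abs_of_nonneg (by omega), abs_of_nonneg (by omega)]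
      ring
    have hSp : (∑ t, |p t - m t|) = (∑ t, |x t - m t|) - 1 := by
      have := sum_sub_single (fun t => |p t - m t|) (fun t => |x t - m t|) i
        (fun t ht => by
          show |p t - m t| = |x t - m t|
          have h : p t = x t := by simp [hpdef, evec_ne ht]
          rw [h])
      beta_reduce at this
      rw [this, habsi]; ring
    have habsjj : ∀ y : Fin r → ℤ, y jj = x jj →
        |y jj + 1 - m jj| = |y jj - m jj| - 1 := by
      intro y hy
      rw [hy, abs_of_nonpos (by omega), abs_of_neg (by omega)]
      ring
    have hSs : (∑ t, |s t - m t|) = (∑ t, |x t - m t|) - 1 := by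
      have := sum_sub_single (fun t => |s t - m t|) (fun t => |x t - m t|) jj
        (fun t ht => by
          show |s t - m t| = |x t - m t|
          have h : s t = x t := by simp [hsdef, evec_ne ht]
          rw [h])
      have hsj : s jj = x jj + 1 := by simp [hsdef, evec_self]
      beta_reduce at this
      rw [this, hsj]
      rw [abs_of_nonpos (by omega), abs_of_neg (by omega)]
      ring
    have hSq : (∑ t, |q t - m t|) = (∑ t, |x t - m t|) - 2 := by
      have := sum_sub_single (fun t => |q t - m t|) (fun t => |p t - m t|) jj
        (fun t ht => by
          show |q t - m t| = |p t - m t|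
          have h : q t = p t := by simp [hqdef, hpdef, evec_ne ht]
          rw [h])
      have hqj : q jj = p jj + 1 := by simp [hqdef, hpdef, evec_self]
      have hpj : p jj = x jj := by simp [hpdef, evec_ne hij.symm]
      beta_reduce at this
      rw [this, hSp, hqj, hpj]
      rw [abs_of_nonpos (by omega), abs_of_neg (by omega)]
      ring
    have hcast : ((k + 1 : ℕ) : ℤ) = (k : ℤ) + 1 := by push_cast; ring
    rw [hcast] at hx3
    -- IH at p, q, s
    have hwp : w p = w' p := ih p hp0 hpmn (by omega)
    have hwq : w q = w' q := ih q hq0 hqmn (by omega)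
    have hws : w s = w' s := ih s hs0 hsmn (by omega)
    -- edges
    have e1 : M jj (w q) (w p) = 1 := hw.2 p jj hp0 hqmn
    have e2 : M i (w s) (w q) = 1 := by
      have := hw.2 q i hq0 (by rw [hqi]; exact hsmn)
      rwa [hqi] at this
    have ex1 : M i (w x) (w p) = 1 := by
      have := hw.2 p i hp0 (by rw [hpi]; exact hx2)
      rwa [hpi] at this
    have ex2 : M jj (w s) (w x) = 1 := hw.2 x jj hx1 hsmn
    have ex1' : M i (w' x) (w' p) = 1 := by
      have := hw'.2 p i hp0 (by rw [hpi]; exact hx2)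
      rwa [hpi] at this
    have ex2' : M jj (w' s) (w' x) = 1 := hw'.2 x jj hx1 hsmn
    obtain ⟨d, hd1, hd2, hd3⟩ := square M hM h1a h1b (Ne.symm hij) e1 e2
    have hx' := hd3 (w x) ex1 ex2
    have hx'' := hd3 (w' x) (by rw [hwp] at ex1 ⊢; exact ex1')
      (by rw [hws] at ex2 ⊢; exact ex2')
    rw [hx', hx'']

variable [Nonempty A]
lemma mul_entry_nonneg (hM : ∀ j (a b : A), M j b a = 0 ∨ M j b a = 1)
    (i j : Fin r) (a b : A) : 0 ≤ (M i * M j) b a := by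
  rw [Matrix.mul_apply]
  exact Finset.sum_nonneg fun x _ =>
    mul_nonneg (Mnonneg M hM i x b) (Mnonneg M hM j a x)

lemma extendCorner (hM : ∀ j (a b : A), M j b a = 0 ∨ M j b a = 1)
    (h1a : H1a M) (h1b : H1b M) (h1c : H1c M) {N : Fin r → ℤ} (hN : 0 ≤ N) (j : Fin r)
    {w : (Fin r → ℤ) → A} (hw : IsWord M N w) {c : A} (hc : M j c (w N) = 1) :
    ∃ w', IsWord M (N + evec r j) w' ∧ AgreeOn N w' w ∧ w' (N + evec r j) = c := by
  classical
  set D : (Fin r → ℤ) → ℤ := fun y => (∑ t, (N t - y t)) + 1 with hDdef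
  have hDalt : ∀ y : Fin r → ℤ, y j = N j + 1 →
      D y = ∑ t ∈ Finset.univ.erase j, (N t - y t) := by
    intro y hy
    have h := Finset.sum_erase_add Finset.univ (fun t => N t - y t) (Finset.mem_univ j)
    beta_reduce at h
    have h2 : D y = (∑ t, (N t - y t)) + 1 := rfl
    rw [h2, ← h, hy]
    ring
  have hDzero : ∀ y : Fin r → ℤ, 0 ≤ y → y ≤ N + evec r j → y j = N j + 1 →
      D y ≤ 0 → y = N + evec r j := by
    intro y hy0 hyN hyj hyD
    rw [hDalt y hyj] at hyD
    have hnn : ∀ t ∈ Finset.univ.erase j, 0 ≤ N t - y t := by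
      intro t ht
      have htj := Finset.ne_of_mem_erase ht
      have h2 : y t ≤ (N + evec r j) t := hyN t
      rw [add_evec_ne N htj] at h2
      omega
    have hz := (Finset.sum_eq_zero_iff_of_nonneg hnn).mp
      (le_antisymm hyD (Finset.sum_nonneg hnn))
    funext t
    rcases eq_or_ne t j with rfl | htj
    · rw [add_evec_self]; omega
    · have := hz t (Finset.mem_erase.mpr ⟨htj, Finset.mem_univ t⟩)
      rw [add_evec_ne N htj]
      omega
  have hDstep : ∀ (y : Fin r → ℤ) (i : Fin r), D (y + evec r i) = D y - 1 := by
    intro y i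
    have h := sum_sub_single (fun t => N t - (y + evec r i) t) (fun t => N t - y t) i
      (fun t ht => by
        show N t - (y + evec r i) t = N t - y t
        rw [add_evec_ne y ht])
    have h1 : D (y + evec r i) = (∑ t, (N t - (y + evec r i) t)) + 1 := rfl
    have h2 : D y = (∑ t, (N t - y t)) + 1 := rfl
    beta_reduce at h
    rw [h1, h2, h, add_evec_self]
    ring
  have hN' : ∀ t, (0:ℤ) ≤ N t := fun t => hN t
  have hDbound : ∀ y : Fin r → ℤ, 0 ≤ y → y ≤ N + evec r j → y j = N j + 1 →
      D y ≤ ((∑ t, N t).toNat : ℤ) := by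
    intro y hy0 hyN hyj
    rw [hDalt y hyj]
    have h1 : ∑ t ∈ Finset.univ.erase j, (N t - y t) ≤ ∑ t ∈ Finset.univ.erase j, N t :=
      Finset.sum_le_sum (fun t _ => by have : (0:ℤ) ≤ y t := hy0 t; omega)
    have h2 : ∑ t ∈ Finset.univ.erase j, N t ≤ ∑ t, N t :=
      Finset.sum_le_sum_of_subset_of_nonneg (Finset.subset_univ _) (fun t _ _ => hN' t)
    have h3 : (0:ℤ) ≤ ∑ t, N t := Finset.sum_nonneg (fun t _ => hN t)
    rw [Int.toNat_of_nonneg h3]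
    omega
  have main : ∀ k : ℕ, ∃ w₀ : (Fin r → ℤ) → A,
      (∀ l, 0 ≤ l → l ≤ N → w₀ l = w l) ∧
      w₀ (N + evec r j) = c ∧
      (∀ y, 0 ≤ y → y ≤ N + evec r j → y j = N j + 1 → D y ≤ (k:ℤ) →
        M j (w₀ y) (w (y - evec r j)) = 1) ∧
      (∀ y i, 0 ≤ y → y ≤ N + evec r j → y j = N j + 1 → i ≠ j → y i < N i →
        D y ≤ (k:ℤ) → M i (w₀ (y + evec r i)) (w₀ y) = 1) := by
    intro k
    induction k with
    | zero =>
      refine ⟨fun y => if y = N + evec r j then c else w y, ?_, ?_, ?_, ?_⟩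
      · intro l hl0 hlN
        beta_reduce
        have hne : l ≠ N + evec r j := by
          intro h
          have h1 : l j ≤ N j := hlN j
          rw [h, add_evec_self] at h1
          omega
        rw [if_neg hne]
      · beta_reduce; rw [if_pos rfl]
      · intro y hy0 hyN hyj hyD
        have hy : y = N + evec r j := hDzero y hy0 hyN hyj (by exact_mod_cast hyD)
        subst hy
        beta_reduce
        rw [if_pos rfl, show N + evec r j - evec r j = N from by ring]
        exact hc
      · intro y i hy0 hyN hyj hij hyi hyD
        have hy : y = N + evec r j := hDzero y hy0 hyN hyj (by exact_mod_cast hyD)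
        exfalso
        have := congrFun hy i
        rw [add_evec_ne N hij] at this
        omega
    | succ k ih =>
      obtain ⟨w₀, A1, A2, A3, A4⟩ := ih
      have hnn := Mnonneg M hM
      have key : ∀ y : Fin r → ℤ, ∃ d : A,
          (0 ≤ y ∧ y ≤ N + evec r j ∧ y j = N j + 1 ∧ D y = (k:ℤ)+1) →
          (M j d (w (y - evec r j)) = 1 ∧
           ∀ i, i ≠ j → y i < N i → M i (w₀ (y + evec r i)) d = 1) := by
        intro y
        by_cases hy : 0 ≤ y ∧ y ≤ N + evec r j ∧ y j = N j + 1 ∧ D y = (k:ℤ)+1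
        case neg => exact ⟨Classical.arbitrary A, fun h => absurd h hy⟩
        obtain ⟨hy0, hyN, hyj, hyD⟩ := hy
        have hex : ∃ i₀, i₀ ≠ j ∧ y i₀ < N i₀ := by
          by_contra hno
          push_neg at hno
          have h0 : D y = 0 := by
            rw [hDalt y hyj]
            apply Finset.sum_eq_zero
            intro t ht
            have htj := Finset.ne_of_mem_erase ht
            have h1 := hno t htj
            have h2 : y t ≤ (N + evec r j) t := hyN t
            rw [add_evec_ne N htj] at h2
            omega
          rw [h0] at hyD
          omega
        obtain ⟨i₀, hi₀j, hi₀⟩ := hex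
        -- boxes for y - e_j and its neighbours
        have hy0' : ∀ t, (0:ℤ) ≤ y t := fun t => hy0 t
        have hyme : (0:Fin r → ℤ) ≤ y - evec r j := by
          intro t
          show (0:ℤ) ≤ (y - evec r j) t
          rcases eq_or_ne t j with rfl | htj
          · rw [sub_evec_self]; have := hN' t; omega
          · rw [sub_evec_ne y htj]; exact hy0' t
        have hboxgen : ∀ i₀' : Fin r, i₀' ≠ j → y i₀' < N i₀' →
            y - evec r j + evec r i₀' ≤ N ∧ (0:Fin r → ℤ) ≤ y + evec r i₀' ∧
            y + evec r i₀' ≤ N + evec r j ∧ (y + evec r i₀') j = N j + 1 := by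
          intro i' hi'j hi'
          refine ⟨?_, ?_, ?_, ?_⟩
          · intro t
            rcases eq_or_ne t i' with rfl | hti
            · rw [add_evec_self, sub_evec_ne y (fun h => hi'j h)]; linarith [hi']
            · rw [add_evec_ne _ hti]
              rcases eq_or_ne t j with rfl | htj
              · rw [sub_evec_self]; linarith [hyj]
              · rw [sub_evec_ne y htj]
                have h2 : y t ≤ (N + evec r j) t := hyN t
                rw [add_evec_ne N htj] at h2
                exact h2
          · intro t
            show (0:ℤ) ≤ (y + evec r i') t
            rcases eq_or_ne t i' with rfl | hti
            · rw [add_evec_self]; have := hy0' t; omega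
            · rw [add_evec_ne _ hti]; exact hy0' t
          · intro t
            rcases eq_or_ne t i' with rfl | hti
            · rw [add_evec_self, add_evec_ne N (fun h => hi'j h)]; linarith [hi']
            · rw [add_evec_ne _ hti]; exact hyN t
          · rw [add_evec_ne y (fun h : j = i' => hi'j h.symm)]
            exact hyj
        obtain ⟨hb1, hb2, hb3, hb4⟩ := hboxgen i₀ hi₀j hi₀
        have h1 : M i₀ (w (y - evec r j + evec r i₀)) (w (y - evec r j)) = 1 :=
          hw.2 (y - evec r j) i₀ hyme hb1
        have hDi₀ : D (y + evec r i₀) = (k:ℤ) := by rw [hDstep y i₀, hyD]; ring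
        have h2 : M j (w₀ (y + evec r i₀)) (w (y - evec r j + evec r i₀)) = 1 := by
          have h := A3 (y + evec r i₀) hb2 hb3 hb4 (le_of_eq hDi₀)
          rwa [show y + evec r i₀ - evec r j = y - evec r j + evec r i₀ from by ring] at h
        obtain ⟨d, hd1, hd2, hd3⟩ := square M hM h1a h1b hi₀j h1 h2
        refine ⟨d, fun _ => ⟨hd1, ?_⟩⟩
        intro i' hi'j hi'
        rcases eq_or_ne i' i₀ with rfl | hne
        · exact hd2
        obtain ⟨hc1, hc2, hc3, hc4⟩ := hboxgen i' hi'j hi'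
        have f6 : M i' (w (y - evec r j + evec r i')) (w (y - evec r j)) = 1 :=
          hw.2 (y - evec r j) i' hyme hc1
        have hDi' : D (y + evec r i') = (k:ℤ) := by rw [hDstep y i', hyD]; ring
        have f4 : M j (w₀ (y + evec r i')) (w (y - evec r j + evec r i')) = 1 := by
          have h := A3 (y + evec r i') hc2 hc3 hc4 (le_of_eq hDi')
          rwa [show y + evec r i' - evec r j = y - evec r j + evec r i' from by ring] at h
        have f1 : M i' (w₀ (y + evec r i₀ + evec r i')) (w₀ (y + evec r i₀)) = 1 :=
          A4 (y + evec r i₀) i' hb2 hb3 hb4 hi'j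
            (by rw [add_evec_ne y hne]; exact hi') (le_of_eq hDi₀)
        have f2 : M i₀ (w₀ (y + evec r i₀ + evec r i')) (w₀ (y + evec r i')) = 1 := by
          have h := A4 (y + evec r i') i₀ hc2 hc3 hc4 hi₀j
            (by rw [add_evec_ne y (Ne.symm hne)]; exact hi₀) (le_of_eq hDi')
          rwa [show y + evec r i' + evec r i₀ = y + evec r i₀ + evec r i' from by ring] at h
        obtain ⟨d'', g1, g2, g3⟩ := square M hM h1a h1b hi'j f6 f4
        set a := w (y - evec r j) with ha
        set b := w₀ (y + evec r i₀) with hb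
        set e2 := w₀ (y + evec r i') with he2
        set B := w₀ (y + evec r i₀ + evec r i') with hB
        have hS : (M i' * M i₀ * M j) B a = 1 := by
          have le1 : (M i' * M i₀ * M j) B a ≤ 1 := trip_le_one M h1a h1c hne hi'j hi₀j a B
          have hmid : 1 ≤ (M j * M i₀) b a := by
            rw [Matrix.mul_apply]
            refine one_le_sum _ (fun x => mul_nonneg (hnn j x b) (hnn i₀ a x))
              (w (y - evec r j + evec r i₀)) ?_
            rw [h2, h1]; norm_num
          have ge1 : 1 ≤ (M i' * (M j * M i₀)) B a := by
            rw [Matrix.mul_apply]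
            refine one_le_sum _
              (fun x => mul_nonneg (hnn i' x B) (mul_entry_nonneg M hM j i₀ a x)) b ?_
            rw [f1, one_mul]; exact hmid
          have eq1 : M i' * M i₀ * M j = M i' * (M j * M i₀) := by
            rw [mul_assoc, h1a i₀ j]
          rw [eq1]
          rw [eq1] at le1
          exact le_antisymm le1 ge1
        have hS2 : ∑ d₁, (M i' * M i₀) B d₁ * M j d₁ a = 1 := by
          rw [← Matrix.mul_apply]; exact hS
        have t1 : 1 ≤ (M i' * M i₀) B d * M j d a := by
          have h' : 1 ≤ (M i' * M i₀) B d := by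
            rw [Matrix.mul_apply]
            refine one_le_sum _ (fun x => mul_nonneg (hnn i' x B) (hnn i₀ d x)) b ?_
            rw [f1, hd2]; norm_num
          rw [hd1, mul_one]; exact h'
        have t2 : 1 ≤ (M i' * M i₀) B d'' * M j d'' a := by
          have h' : 1 ≤ (M i' * M i₀) B d'' := by
            rw [h1a i' i₀, Matrix.mul_apply]
            refine one_le_sum _ (fun x => mul_nonneg (hnn i₀ x B) (hnn i' d'' x)) e2 ?_
            rw [f2, g2]; norm_num
          rw [g1, mul_one]; exact h'
        have hdd : d = d'' := eq_of_sum_le_one _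
          (fun x => mul_nonneg (mul_entry_nonneg M hM i' i₀ x B) (hnn j a x))
          (le_of_eq hS2) t1 t2
        rw [hdd]; exact g2
      choose g hg using key
      refine ⟨fun y => if h : (0 ≤ y ∧ y ≤ N + evec r j ∧ y j = N j + 1 ∧ D y = (k:ℤ)+1)
        then g y else w₀ y, ?_, ?_, ?_, ?_⟩
      · intro l hl0 hlN
        beta_reduce
        rw [dif_neg]
        · exact A1 l hl0 hlN
        · intro h
          have h1 : l j ≤ N j := hlN j
          have h2 := h.2.2.1
          omega
      · beta_reduce
        rw [dif_neg]
        · exact A2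
        · intro h
          have h0 : D (N + evec r j) = 0 := by
            rw [hDalt _ (add_evec_self N j)]
            apply Finset.sum_eq_zero
            intro t ht
            rw [add_evec_ne N (Finset.ne_of_mem_erase ht)]
            ring
          have h3 := h.2.2.2
          rw [h0] at h3
          omega
      · intro y hy0 hyN hyj hyD
        beta_reduce
        have hyD' : D y ≤ (k:ℤ)+1 := by exact_mod_cast hyD
        by_cases hcase : D y = (k:ℤ)+1
        · rw [dif_pos ⟨hy0, hyN, hyj, hcase⟩]
          exact (hg y ⟨hy0, hyN, hyj, hcase⟩).1
        · rw [dif_neg (fun h => hcase h.2.2.2)]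
          refine A3 y hy0 hyN hyj ?_
          rcases lt_or_eq_of_le hyD' with h | h
          · exact Int.lt_add_one_iff.mp h
          · exact absurd h hcase
      · intro y i hy0 hyN hyj hij' hyi hyD
        beta_reduce
        have hstep := hDstep y i
        have hyD' : D y ≤ (k:ℤ)+1 := by exact_mod_cast hyD
        have hne2 : ¬ (0 ≤ y + evec r i ∧ y + evec r i ≤ N + evec r j ∧
            (y + evec r i) j = N j + 1 ∧ D (y + evec r i) = (k:ℤ)+1) := by
          intro h
          have h3 := h.2.2.2
          rw [hstep] at h3
          linarith
        rw [dif_neg hne2]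
        by_cases hcase : D y = (k:ℤ)+1
        · rw [dif_pos ⟨hy0, hyN, hyj, hcase⟩]
          exact (hg y ⟨hy0, hyN, hyj, hcase⟩).2 i hij' hyi
        · rw [dif_neg (fun h => hcase h.2.2.2)]
          refine A4 y i hy0 hyN hyj hij' hyi ?_
          rcases lt_or_eq_of_le hyD' with h | h
          · exact Int.lt_add_one_iff.mp h
          · exact absurd h hcase
  obtain ⟨w₀, A1, A2, A3, A4⟩ := main (∑ t, N t).toNat
  refine ⟨w₀, ⟨?_, ?_⟩, A1, A2⟩
  · exact add_nonneg hN (evec_nonneg j)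
  · intro l i hl0 hlN
    by_cases hcase : (l + evec r i) j ≤ N j
    · have hlN' : l + evec r i ≤ N := by
        intro t
        rcases eq_or_ne t j with rfl | htj
        · exact hcase
        · have h2 : (l + evec r i) t ≤ (N + evec r j) t := hlN t
          rw [add_evec_ne N htj] at h2
          exact h2
      have hlN'' : l ≤ N := le_trans (le_add_of_nonneg_right (evec_nonneg i)) hlN'
      rw [A1 l hl0 hlN'', A1 (l + evec r i) (add_nonneg hl0 (evec_nonneg i)) hlN']
      exact hw.2 l i hl0 hlN'
    · have hji : (l + evec r i) j = N j + 1 := by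
        have h2 : (l + evec r i) j ≤ (N + evec r j) j := hlN j
        rw [add_evec_self] at h2
        omega
      rcases eq_or_ne i j with rfl | hij'
      · have hlj : l i = N i := by
          rw [add_evec_self] at hji
          omega
        have hlN'' : l ≤ N := by
          intro t
          rcases eq_or_ne t i with rfl | htj
          · exact le_of_eq hlj
          · have h2 : (l + evec r i) t ≤ (N + evec r i) t := hlN t
            rw [add_evec_ne N htj, add_evec_ne l htj] at h2
            exact h2
        have h3 := A3 (l + evec r i) (add_nonneg hl0 (evec_nonneg i)) hlN hji
          (hDbound _ (add_nonneg hl0 (evec_nonneg i)) hlN hji)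
        rw [show l + evec r i - evec r i = l from by ring] at h3
        rw [A1 l hl0 hlN'']
        exact h3
      · have hlj : l j = N j + 1 := by
          rwa [add_evec_ne l (Ne.symm hij')] at hji
        have hli : l i < N i := by
          have h2 : (l + evec r i) i ≤ (N + evec r j) i := hlN i
          rw [add_evec_self, add_evec_ne N hij'] at h2
          omega
        have hl0N : l ≤ N + evec r j := le_trans (le_add_of_nonneg_right (evec_nonneg i)) hlN
        exact A4 l i hl0 hl0N hlj hij' hli (hDbound l hl0 hl0N hlj)

end auxx

/-- conditions (H1a), (H1b) and (H1c) imply condition (H1). -/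
theorem stmt_4 [Fintype A] [Nonempty A] (hr : 0 < r)
    (M : Fin r → Matrix A A ℤ)
    (hM : ∀ j (a b : A), M j b a = 0 ∨ M j b a = 1)
    (h1a : H1a M) (h1b : H1b M) (h1c : H1c M) :
    H1 M := by
  classical
  intro m n u v hu hv huv
  have hm := hu.1
  have hn := hv.1
  constructor
  · -- existence
    have exmain : ∀ s : ℕ, ∀ n : Fin r → ℤ, 0 ≤ n → (∑ t, n t) ≤ (s:ℤ) →
        ∀ (m : Fin r → ℤ) (u v : (Fin r → ℤ) → A), IsWord M m u → IsWord M n v → u m = v 0 →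
        ∃ w, IsWord M (m + n) w ∧ AgreeOn m w u ∧ AgreeOn n (restrictW m w) v := by
      intro s
      induction s with
      | zero =>
        intro n hn hs m u v hu hv huv
        have hn0 : n = 0 := by
          funext t
          have h1 : ∀ t', (0:ℤ) ≤ n t' := fun t' => hn t'
          have h2 : n t ≤ ∑ t', n t' :=
            Finset.single_le_sum (fun t' _ => h1 t') (Finset.mem_univ t)
          have hs' : (∑ t', n t') ≤ 0 := by exact_mod_cast hs
          have h3 : (0:ℤ) ≤ n t := h1 t
          show n t = (0:ℤ)
          omega
        subst hn0
        refine ⟨u, by rwa [add_zero], fun l _ _ => rfl, ?_⟩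
        intro x hx0 hx
        have hx0' : x = 0 := le_antisymm hx hx0
        subst hx0'
        show u (0 + m) = v 0
        rw [zero_add]
        exact huv
      | succ s ih =>
        intro n hn hs m u v hu hv huv
        have hm := hu.1
        by_cases hsmall : (∑ t, n t) ≤ (s:ℤ)
        · exact ih n hn hsmall m u v hu hv huv
        have hj : ∃ j, 0 < n j := by
          by_contra hno
          push_neg at hno
          have h1 : ∀ t, n t = 0 := fun t => le_antisymm (hno t) (hn t : (0:ℤ) ≤ n t)
          have h2 : (∑ t, n t) = 0 := Finset.sum_eq_zero (fun t _ => h1 t)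
          rw [h2] at hsmall
          exact hsmall (Int.natCast_nonneg s)
        obtain ⟨j, hj⟩ := hj
        set n' := n - evec r j with hn'def
        have hn'0 : 0 ≤ n' := by
          intro t
          show (0:ℤ) ≤ (n - evec r j) t
          have h1 : (0:ℤ) ≤ n t := hn t
          rcases eq_or_ne t j with rfl | htj
          · rw [sub_evec_self]; omega
          · rw [sub_evec_ne n htj]; exact h1
        have hn'n : n' ≤ n := by
          intro t
          show (n - evec r j) t ≤ n t
          rcases eq_or_ne t j with rfl | htj
          · rw [sub_evec_self]; omega
          · rw [sub_evec_ne n htj]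
        have hsum' : (∑ t, n' t) ≤ (s:ℤ) := by
          have h := sum_sub_single (fun t => n' t) (fun t => n t) j
            (fun t ht => sub_evec_ne n ht)
          beta_reduce at h
          have h2 : n' j = n j - 1 := sub_evec_self n j
          have hs2 : (∑ t, n t) ≤ (s:ℤ) + 1 := by
            have : (∑ t, n t) ≤ ((s+1:ℕ):ℤ) := hs
            push_cast at this
            linarith
          linarith
        have hvn' : IsWord M n' v :=
          ⟨hn'0, fun l t hl0 hle => hv.2 l t hl0 (le_trans hle hn'n)⟩
        obtain ⟨w₁, hw₁, hw₁u, hw₁v⟩ := ih n' hn'0 hsum' m u v hu hvn' huv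
        have hmn' : 0 ≤ m + n' := add_nonneg hm hn'0
        have e2 : n' + evec r j = n := by rw [hn'def]; ring
        have hcorner : M j (v n) (w₁ (m + n')) = 1 := by
          have e1 : w₁ (n' + m) = v n' := hw₁v n' hn'0 le_rfl
          have e3 := hv.2 n' j hn'0 (le_of_eq e2)
          rw [e2] at e3
          rw [show m + n' = n' + m from by ring, e1]
          exact e3
        obtain ⟨w, hwword, hwagree, hwcorner⟩ :=
          extendCorner M hM h1a h1b h1c hmn' j hw₁ hcorner
        have emn : m + n' + evec r j = m + n := by rw [hn'def]; ring
        rw [emn] at hwword hwcorner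
        refine ⟨w, hwword, ?_, ?_⟩
        · intro l hl0 hlm
          have hlmn' : l ≤ m + n' := le_trans hlm (le_add_of_nonneg_right hn'0)
          rw [hwagree l hl0 hlmn']
          exact hw₁u l hl0 hlm
        · -- restriction of w is a word of shape n
          have hrw : IsWord M n (restrictW m w) := by
            refine ⟨hn, fun l t hl0 hle => ?_⟩
            have hb : l + m + evec r t ≤ m + n := by
              intro t'
              have h1 : (l + evec r t) t' ≤ n t' := hle t'
              have h2 : (0:ℤ) ≤ m t' := hm t'
              show (l + m + evec r t) t' ≤ (m + n) t'
              have h3 : (l + m + evec r t) t' = (l + evec r t) t' + m t' := by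
                show l t' + m t' + _ = l t' + _ + m t'
                ring
              rw [h3]
              show (l + evec r t) t' + m t' ≤ m t' + n t'
              omega
            have h := hwword.2 (l + m) t (add_nonneg hl0 hm) hb
            show M t (w (l + evec r t + m)) (w (l + m)) = 1
            rwa [show l + evec r t + m = l + m + evec r t from by ring]
          have hL1 : ∀ l, 0 ≤ l → l ≤ n' → (restrictW m w) l = v l := by
            intro l hl0 hln'
            show w (l + m) = v l
            have hbox : l + m ≤ m + n' := by
              intro t
              have h1 : l t ≤ n' t := hln' t
              have h2 : (0:ℤ) ≤ m t := hm t
              show l t + m t ≤ m t + n' t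
              omega
            rw [hwagree (l + m) (add_nonneg hl0 hm) hbox]
            exact hw₁v l hl0 hln'
          have hL2 : ∀ l, n' ≤ l → l ≤ n' + evec r j → (restrictW m w) l = v l := by
            intro l hl1 hl2
            by_cases hlj : l j = n' j
            · have hln' : l = n' := by
                funext t
                rcases eq_or_ne t j with htj | htj
                · rw [htj]; exact hlj
                · have h1 : n' t ≤ l t := hl1 t
                  have h2 : l t ≤ (n' + evec r j) t := hl2 t
                  rw [add_evec_ne n' htj] at h2
                  omega
              rw [hln']
              exact hL1 n' hn'0 le_rfl
            · have hln : l = n := by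
                funext t
                rcases eq_or_ne t j with htj | htj
                · rw [htj]
                  have h1 : n' j ≤ l j := hl1 j
                  have h2 : l j ≤ (n' + evec r j) j := hl2 j
                  rw [add_evec_self] at h2
                  have h3 : n' j = n j - 1 := sub_evec_self n j
                  omega
                · have h1 : n' t ≤ l t := hl1 t
                  have h2 : l t ≤ (n' + evec r j) t := hl2 t
                  rw [add_evec_ne n' htj] at h2
                  have h3 : n' t = n t := sub_evec_ne n htj
                  omega
              rw [hln]
              show w (n + m) = v n
              rw [show n + m = m + n from by ring]
              exact hwcorner
          have hveq : IsWord M (n' + evec r j) (restrictW m w) := by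
            rw [e2]; exact hrw
          have hveq2 : IsWord M (n' + evec r j) v := by
            rw [e2]; exact hv
          have key := agree_of_L M hM h1a h1b hn'0 (evec_nonneg j) hveq hveq2 hL1 hL2
          intro x hx0 hxn
          exact key x hx0 (by rw [e2]; exact hxn)
    exact exmain (∑ t, n t).toNat n hn (Int.self_le_toNat _) m u v hu hv huv
  · -- uniqueness
    intro w w' hw hwu hwv hw' hw'u hw'v
    apply agree_of_L M hM h1a h1b hm hn hw hw'
    · intro l hl0 hlm
      rw [hwu l hl0 hlm, hw'u l hl0 hlm]
    · intro l hml hlmn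
      have h1 : 0 ≤ l - m := by
        intro t
        have h2 : m t ≤ l t := hml t
        show (0:ℤ) ≤ l t - m t
        omega
      have h2 : l - m ≤ n := by
        intro t
        have ha : l t ≤ (m + n) t := hlmn t
        have hb : m t ≤ l t := hml t
        show l t - m t ≤ n t
        have hc : (m + n) t = m t + n t := rfl
        omega
      have e1 : w ((l - m) + m) = v (l - m) := hwv (l - m) h1 h2
      have e2 : w' ((l - m) + m) = v (l - m) := hw'v (l - m) h1 h2
      have e3 : (l - m) + m = l := by ring
      rw [e3] at e1 e2
      rw [e1, e2]
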